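/- Fix a system of positive coset-depending weights w. The coset weighted pure harmonic subspace ℋ^{cw}, defined as the orthogonal complement in 𝒢 (with respect to ⟨c,c'⟩ = Σ_i Σ_s c_i(s)c'_i(s)) of the subspace 𝒢_P^{cw} of coset weighted potential games with respect to w, has dimension (n−1)k − Σ_{j=1}^n k/k_j + 1, where k = Π_{i=1}^n k_i. -/

import Mathlib

/-- `f : S → ℝ` depends only on the strategies of the players other than `i`
(i.e. it is a function of `s_{-i}`). -/
def IndepOf {n : ℕ} {k : Fin n → ℕ} (i : Fin n) (f : (∀ j, Fin (k j)) → ℝ) : Prop :=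
  ∀ (s : ∀ j, Fin (k j)) (x : Fin (k i)), f (Function.update s i x) = f s

/-- `P` is a coset weighted potential function for the game `c` with respect to the
coset-depending weights `w`. -/
def IsCWPotentialFn {n : ℕ} {k : Fin n → ℕ} (c w : Fin n → (∀ j, Fin (k j)) → ℝ)
    (P : (∀ j, Fin (k j)) → ℝ) : Prop :=
  ∀ (i : Fin n) (s : ∀ j, Fin (k j)) (x y : Fin (k i)),
    c i (Function.update s i x) - c i (Function.update s i y)
      = w i s * (P (Function.update s i x) - P (Function.update s i y))

/-- `c` is a coset weighted potential game with respect to `w`. -/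
def IsCWPG {n : ℕ} {k : Fin n → ℕ} (w c : Fin n → (∀ j, Fin (k j)) → ℝ) : Prop :=
  ∃ P, IsCWPotentialFn c w P

/-- `c` is a coset weighted pure potential game w.r.t. `w`:
`c_i(s) = w_i(s_{-i}) (P(s) − (1/k_i) Σ_{x ∈ S_i} P(x, s_{-i}))` for some `P`. -/
def IsCWPurePotential {n : ℕ} {k : Fin n → ℕ}
    (w c : Fin n → (∀ j, Fin (k j)) → ℝ) : Prop :=
  ∃ P : (∀ j, Fin (k j)) → ℝ, ∀ (i : Fin n) (s : ∀ j, Fin (k j)),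
    c i s = w i s * (P s - (1 / (k i : ℝ)) * ∑ x : Fin (k i), P (Function.update s i x))

/-- `c` is a non-strategic game. -/
def IsNonStrategic {n : ℕ} {k : Fin n → ℕ} (c : Fin n → (∀ j, Fin (k j)) → ℝ) : Prop :=
  ∀ (i : Fin n) (s : ∀ j, Fin (k j)) (x y : Fin (k i)),
    c i (Function.update s i x) = c i (Function.update s i y)

/-- The inner product `⟨c, c'⟩ = Σ_i Σ_s c_i(s) c'_i(s)` on the space of games. -/
noncomputable def gameInner {n : ℕ} {k : Fin n → ℕ}
    (c c' : Fin n → (∀ j, Fin (k j)) → ℝ) : ℝ :=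
  ∑ i : Fin n, ∑ s : ∀ j, Fin (k j), c i s * c' i s

/-- `c` is a coset weighted pure harmonic game w.r.t. `w`: it is orthogonal to every
coset weighted potential game w.r.t. `w`. -/
def IsCWPureHarmonic {n : ℕ} {k : Fin n → ℕ}
    (w c : Fin n → (∀ j, Fin (k j)) → ℝ) : Prop :=
  ∀ c' : Fin n → (∀ j, Fin (k j)) → ℝ, IsCWPG w c' → gameInner c c' = 0

open Finset

namespace PHD

variable {n : ℕ} {k : Fin n → ℕ}

noncomputable def avgFn (i : Fin n) (P : (∀ j, Fin (k j)) → ℝ) (s : ∀ j, Fin (k j)) : ℝ :=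
  (1 / (k i : ℝ)) * ∑ x : Fin (k i), P (Function.update s i x)

abbrev Dom (n : ℕ) (k : Fin n → ℕ) :=
  ((∀ j, Fin (k j)) → ℝ) × (∀ i : Fin n, ((∀ j : {j : Fin n // j ≠ i}, Fin (k j.1)) → ℝ))

noncomputable def Psi (w : Fin n → (∀ j, Fin (k j)) → ℝ) :
    Dom n k →ₗ[ℝ] (Fin n → (∀ j, Fin (k j)) → ℝ) where
  toFun p := fun i s => w i s * (p.1 s - avgFn i p.1 s) + p.2 i (fun j => s j.1)
  map_add' p q := by
    funext i s
    simp only [avgFn, Prod.fst_add, Prod.snd_add, Pi.add_apply, Finset.sum_add_distrib]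
    ring
  map_smul' a p := by
    funext i s
    simp only [avgFn, Prod.smul_fst, Prod.smul_snd, Pi.smul_apply, smul_eq_mul,
      Finset.mul_sum, RingHom.id_apply]
    simp only [← Finset.mul_sum]
    ring

lemma avg_update (i : Fin n) (P : (∀ j, Fin (k j)) → ℝ) (s : ∀ j, Fin (k j)) (x : Fin (k i)) :
    avgFn i P (Function.update s i x) = avgFn i P s := by
  simp [avgFn, Function.update_idem]

lemma restrict_update (i : Fin n) (s : ∀ j, Fin (k j)) (x : Fin (k i)) :
    (fun j : {j : Fin n // j ≠ i} => Function.update s i x j.1) = (fun j : {j : Fin n // j ≠ i} => s j.1) := by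
  funext j
  exact Function.update_of_ne j.2 x s

lemma const_of_update (P : (∀ j, Fin (k j)) → ℝ)
    (h : ∀ (i : Fin n) (s : ∀ j, Fin (k j)) (x : Fin (k i)), P (Function.update s i x) = P s)
    (s t : ∀ j, Fin (k j)) : P s = P t := by
  have key : ∀ A : Finset (Fin n), ∀ s t : ∀ j, Fin (k j),
      (∀ j ∉ A, s j = t j) → P s = P t := by
    intro A
    induction A using Finset.induction_on with
    | empty =>
      intro s t hst
      have : s = t := funext fun j => hst j (by simp)
      rw [this]
    | @insert a A' ha ih =>
      intro s t hst
      have h1 : P s = P (Function.update s a (t a)) := (h a s (t a)).symm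
      rw [h1]
      apply ih
      intro j hj
      by_cases hja : j = a
      · subst hja; simp
      · rw [Function.update_of_ne hja]
        exact hst j (by simp [hja, hj])
  exact key univ s t (fun j hj => absurd (mem_univ j) hj)


noncomputable def gameEquiv (n : ℕ) (k : Fin n → ℕ) :
    (Fin n → (∀ j, Fin (k j)) → ℝ) ≃ₗ[ℝ] EuclideanSpace ℝ (Fin n × (∀ j, Fin (k j))) where
  toFun c := WithLp.toLp 2 (fun p => c p.1 p.2)
  invFun f i s := f (i, s)
  map_add' _ _ := rfl
  map_smul' _ _ := rfl
  left_inv _ := rfl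
  right_inv _ := rfl

lemma gameEquiv_inner {n : ℕ} {k : Fin n → ℕ} (c c' : Fin n → (∀ j, Fin (k j)) → ℝ) :
    (inner ℝ (gameEquiv n k c) (gameEquiv n k c') : ℝ) = gameInner c c' := by
  rw [PiLp.inner_apply]
  simp [RCLike.inner_apply, gameEquiv, gameInner, Fintype.sum_prod_type]
  exact Finset.sum_congr rfl fun i _ => Finset.sum_congr rfl fun s _ => mul_comm _ _

lemma gameInner_comm {n : ℕ} {k : Fin n → ℕ} (c c' : Fin n → (∀ j, Fin (k j)) → ℝ) :
    gameInner c c' = gameInner c' c := by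
  simp [gameInner, mul_comm]

end PHD


set_option maxHeartbeats 1000000 in
/-- **Dimension formula (3.13).** The coset weighted pure harmonic subspace, i.e. the
orthogonal complement of the subspace of coset weighted potential games w.r.t. `w`, has
dimension `(n−1)k − Σ_j k/k_j + 1` where `k = Π_i k_i`. -/
theorem pure_harmonic_subspace_dim (n : ℕ) (hn : 2 ≤ n) (k : Fin n → ℕ)
    (hk : ∀ i, 2 ≤ k i) (w : Fin n → (∀ j, Fin (k j)) → ℝ)
    (hw : ∀ i s, 0 < w i s) (hwI : ∀ i, IndepOf i (w i)) :
    ∃ V : Submodule ℝ (Fin n → (∀ j, Fin (k j)) → ℝ),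
      (∀ c, c ∈ V ↔ IsCWPureHarmonic w c) ∧
      Module.finrank ℝ V = (n - 1) * (∏ i, k i) - (∑ j, (∏ i, k i) / k j) + 1 := by
  classical
  have hkpos : ∀ j, 0 < k j := fun j => lt_of_lt_of_le two_pos (hk j)
  have hkne : ∀ j, (k j : ℝ) ≠ 0 := fun j => Nat.cast_ne_zero.mpr (hkpos j).ne'
  let s0 : ∀ j, Fin (k j) := fun j => ⟨0, hkpos j⟩
  set W : Submodule ℝ (Fin n → (∀ j, Fin (k j)) → ℝ) := LinearMap.range (PHD.Psi w) with hWdef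
  have hPsiApp : ∀ (p : PHD.Dom n k) (i : Fin n) (s : ∀ j, Fin (k j)),
      PHD.Psi w p i s
        = w i s * (p.1 s - PHD.avgFn i p.1 s) + p.2 i (fun j => s j.1) := fun _ _ _ => rfl
  -- membership characterization of W
  have hWmem : ∀ c, c ∈ W ↔ IsCWPG w c := by
    intro c
    constructor
    · rintro ⟨p, rfl⟩
      refine ⟨p.1, fun i s x y => ?_⟩
      rw [hPsiApp, hPsiApp, hwI i s x, hwI i s y, PHD.avg_update, PHD.avg_update,
        PHD.restrict_update, PHD.restrict_update]
      ring
    · rintro ⟨P, hP⟩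
      set r : Fin n → (∀ j, Fin (k j)) → ℝ :=
        fun i s => c i s - w i s * (P s - PHD.avgFn i P s) with hrdef
      have hr : ∀ (i : Fin n) (s : ∀ j, Fin (k j)) (x : Fin (k i)),
          r i (Function.update s i x) = r i s := by
        intro i s x
        have h1 := hP i s x (s i)
        have h2 : w i s * (P (Function.update s i x) - PHD.avgFn i P s)
            - w i s * (P (Function.update s i (s i)) - PHD.avgFn i P s)
            = w i s * (P (Function.update s i x) - P (Function.update s i (s i))) := by ring
        have h3 : r i (Function.update s i x) - r i (Function.update s i (s i)) = 0 := by
          rw [hrdef]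
          simp only
          rw [hwI i s x, hwI i s (s i), PHD.avg_update, PHD.avg_update]
          rw [Function.update_eq_self i s] at h1 ⊢
          rw [Function.update_eq_self i s] at h2
          linarith [h1, h2]
        rw [Function.update_eq_self i s] at h3
        linarith [h3]
      refine ⟨(P, fun i t => r i (fun j => if h : j = i then s0 j else t ⟨j, h⟩)), ?_⟩
      funext i s
      rw [hPsiApp]
      have hext : (fun j => if h : j = i then s0 j
          else (fun j' : {j' : Fin n // j' ≠ i} => s j'.1) ⟨j, h⟩)
          = Function.update s i (s0 i) := by
        funext j
        by_cases h : j = i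
        · subst h; simp
        · simp [h]
      simp only [hext]
      rw [hr i s (s0 i)]
      simp only [hrdef]
      ring
  -- the all-ones pair is in the kernel
  have havg1 : ∀ (i : Fin n) (s : ∀ j, Fin (k j)),
      PHD.avgFn i (fun _ => (1 : ℝ)) s = 1 := by
    intro i s
    simp only [PHD.avgFn, Finset.sum_const, Finset.card_univ, Fintype.card_fin,
      nsmul_eq_mul, mul_one, one_div]
    exact inv_mul_cancel₀ (hkne i)
  have hones : (PHD.Psi w) ((fun _ => (1 : ℝ)), 0) = 0 := by
    funext i s
    rw [hPsiApp]
    simp [havg1 i s]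
  -- kernel is the span of the all-ones pair
  have hsum : ∀ (i : Fin n) (P : (∀ j, Fin (k j)) → ℝ) (s : ∀ j, Fin (k j)),
      ∑ x : Fin (k i), P (Function.update s i x) = (k i : ℝ) * PHD.avgFn i P s := by
    intro i P s
    rw [PHD.avgFn, one_div, ← mul_assoc, mul_inv_cancel₀ (hkne i), one_mul]
  have hker : LinearMap.ker (PHD.Psi w)
      = Submodule.span ℝ {(((fun _ => (1 : ℝ)), 0) : PHD.Dom n k)} := by
    apply le_antisymm
    · intro p hp
      rw [LinearMap.mem_ker] at hp
      have hp' : ∀ (i : Fin n) (s : ∀ j, Fin (k j)),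
          w i s * (p.1 s - PHD.avgFn i p.1 s) + p.2 i (fun j => s j.1) = 0 := by
        intro i s
        have := congrFun (congrFun hp i) s
        rwa [hPsiApp] at this
      have hd0 : ∀ (i : Fin n) (s : ∀ j, Fin (k j)), p.2 i (fun j => s j.1) = 0 := by
        intro i s
        have hsz : ∑ x : Fin (k i),
            (w i s * p.1 (Function.update s i x) - w i s * PHD.avgFn i p.1 s
              + p.2 i (fun j => s j.1)) = 0 := by
          rw [← Finset.sum_eq_zero (fun x (_ : x ∈ Finset.univ) => hp' i (Function.update s i x))]
          refine Finset.sum_congr rfl (fun x _ => ?_)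
          rw [hwI i s x, PHD.avg_update, PHD.restrict_update]
          ring
        rw [Finset.sum_add_distrib, Finset.sum_sub_distrib, ← Finset.mul_sum, hsum i p.1 s,
          Finset.sum_const, Finset.sum_const, Finset.card_univ, Fintype.card_fin,
          nsmul_eq_mul, nsmul_eq_mul] at hsz
        have hk0 : (k i : ℝ) * p.2 i (fun j => s j.1) = 0 := by linarith [hsz]
        rcases mul_eq_zero.mp hk0 with h | h
        · exact absurd h (hkne i)
        · exact h
      have hd0' : ∀ i : Fin n, p.2 i = 0 := by
        intro i
        funext t
        have hre : (fun j : {j : Fin n // j ≠ i} =>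
            (fun j' => if h : j' = i then s0 j' else t ⟨j', h⟩) j.1) = t := by
          funext j
          simp [j.2]
        have := hd0 i (fun j' => if h : j' = i then s0 j' else t ⟨j', h⟩)
        rw [hre] at this
        exact this
      have hPavg : ∀ (i : Fin n) (s : ∀ j, Fin (k j)), p.1 s = PHD.avgFn i p.1 s := by
        intro i s
        have := hp' i s
        rw [hd0 i s, add_zero] at this
        rcases mul_eq_zero.mp this with h | h
        · exact absurd h (ne_of_gt (hw i s))
        · linarith [h]
      have hPup : ∀ (i : Fin n) (s : ∀ j, Fin (k j)) (x : Fin (k i)),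
          p.1 (Function.update s i x) = p.1 s := by
        intro i s x
        rw [hPavg i (Function.update s i x), PHD.avg_update, ← hPavg i s]
      rw [Submodule.mem_span_singleton]
      refine ⟨p.1 s0, ?_⟩
      have h1 : p.1 = fun _ => p.1 s0 :=
        funext fun s => PHD.const_of_update p.1 hPup s s0
      apply Prod.ext
      · funext s
        simp only [Prod.smul_fst, Pi.smul_apply, smul_eq_mul, mul_one]
        exact (congrFun h1 s).symm
      · simp only [Prod.smul_snd, smul_zero]
        exact (funext hd0').symm
    · rw [Submodule.span_singleton_le_iff_mem, LinearMap.mem_ker]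
      exact hones
  -- dimension of the domain
  have hprodsub : ∀ i : Fin n, (∏ j : {j : Fin n // j ≠ i}, k j.1) = (∏ j, k j) / k i := by
    intro i
    have h1 : (∏ j ∈ Finset.univ.erase i, k j) = ∏ j : {j : Fin n // j ≠ i}, k j.1 :=
      Finset.prod_subtype (Finset.univ.erase i) (fun j => by simp) k
    have h2 : (∏ j : {j : Fin n // j ≠ i}, k j.1) * k i = ∏ j, k j := by
      rw [← h1]
      exact Finset.prod_erase_mul Finset.univ k (Finset.mem_univ i)
    rw [← h2, Nat.mul_div_cancel _ (hkpos i)]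
  have hdim_dom : Module.finrank ℝ (PHD.Dom n k)
      = (∏ i, k i) + ∑ i : Fin n, (∏ j, k j) / k i := by
    rw [Module.finrank_prod, Module.finrank_fintype_fun_eq_card, Module.finrank_pi_fintype]
    congr 1
    · rw [Fintype.card_pi]; simp
    · refine Finset.sum_congr rfl (fun i _ => ?_)
      rw [Module.finrank_fintype_fun_eq_card, Fintype.card_pi]
      simp only [Fintype.card_fin]
      exact hprodsub i
  -- dimension of W
  have hvne : (((fun _ => (1 : ℝ)), 0) : PHD.Dom n k) ≠ 0 := by
    intro h
    have := congrFun (congrArg Prod.fst h) s0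
    simp at this
  have hWrank : Module.finrank ℝ W + 1 = (∏ i, k i) + ∑ i : Fin n, (∏ j, k j) / k i := by
    have := LinearMap.finrank_range_add_finrank_ker (PHD.Psi w)
    rwa [hker, finrank_span_singleton hvne, hdim_dom, ← hWdef] at this
  -- pass to Euclidean space
  set e := PHD.gameEquiv n k with hedef
  set Wm : Submodule ℝ (EuclideanSpace ℝ (Fin n × (∀ j, Fin (k j))))
    := W.map e.toLinearMap with hWm
  refine ⟨Wmᗮ.map e.symm.toLinearMap, ?_, ?_⟩
  · intro c
    have hcV : c ∈ Wmᗮ.map e.symm.toLinearMap ↔ e c ∈ Wmᗮ := by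
      constructor
      · rintro ⟨u, hu, rfl⟩
        simpa using hu
      · intro h
        exact ⟨e c, h, e.symm_apply_apply c⟩
    rw [hcV, Submodule.mem_orthogonal]
    have hin : ∀ c' : Fin n → (∀ j, Fin (k j)) → ℝ,
        (inner ℝ (e c') (e c) : ℝ) = gameInner c c' := by
      intro c'
      rw [hedef, PHD.gameEquiv_inner, PHD.gameInner_comm]
    constructor
    · intro h c' hc'
      have h2 := h (e.toLinearMap c') (Submodule.mem_map_of_mem ((hWmem c').mpr hc'))
      rw [LinearEquiv.coe_toLinearMap, hin c'] at h2
      exact h2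
    · rintro h u ⟨c', hc', rfl⟩
      have h2 := h c' ((hWmem c').mp hc')
      rw [← hin c'] at h2
      simpa using h2
  · have hVrank : Module.finrank ℝ (Wmᗮ.map e.symm.toLinearMap)
        = Module.finrank ℝ Wmᗮ := LinearEquiv.finrank_map_eq e.symm Wmᗮ
    have hWmrank : Module.finrank ℝ Wm = Module.finrank ℝ W :=
      LinearEquiv.finrank_map_eq e W
    have hE := Submodule.finrank_add_finrank_orthogonal Wm
    have hEdim : Module.finrank ℝ (EuclideanSpace ℝ (Fin n × (∀ j, Fin (k j))))
        = n * ∏ i, k i := by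
      rw [finrank_euclideanSpace]
      simp [Fintype.card_pi]
    rw [hVrank]
    -- arithmetic
    have hKpos : 0 < ∏ i, k i := Finset.prod_pos (fun i _ => hkpos i)
    have hdvd : ∀ j : Fin n, (∏ i, k i) / k j * k j = ∏ i, k i :=
      fun j => Nat.div_mul_cancel (Finset.dvd_prod_of_mem k (Finset.mem_univ j))
    have h2A : 2 * (∑ j, (∏ i, k i) / k j) ≤ n * ∏ i, k i := by
      calc 2 * (∑ j, (∏ i, k i) / k j) = ∑ j, (∏ i, k i) / k j * 2 := by
            rw [Finset.mul_sum]; exact Finset.sum_congr rfl (fun j _ => mul_comm _ _)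
        _ ≤ ∑ j : Fin n, ∏ i, k i := by
            refine Finset.sum_le_sum (fun j _ => ?_)
            calc (∏ i, k i) / k j * 2 ≤ (∏ i, k i) / k j * k j :=
                  Nat.mul_le_mul_left _ (hk j)
              _ = ∏ i, k i := hdvd j
        _ = n * ∏ i, k i := by simp [Finset.sum_const, mul_comm]
    have hA1 : 1 ≤ ∑ j, (∏ i, k i) / k j := by
      have hpos : 0 < (∏ i, k i) / k ⟨0, by omega⟩ :=
        Nat.div_pos (Nat.le_of_dvd hKpos (Finset.dvd_prod_of_mem k (Finset.mem_univ _))) (hkpos _)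
      calc 1 ≤ (∏ i, k i) / k ⟨0, by omega⟩ := hpos
        _ ≤ ∑ j, (∏ i, k i) / k j :=
          Finset.single_le_sum (f := fun j : Fin n => (∏ i, k i) / k j)
            (fun j _ => Nat.zero_le _) (Finset.mem_univ _)
    have hB : (n - 1) * (∏ i, k i) + (∏ i, k i) = n * ∏ i, k i := by
      have hn1 : n - 1 + 1 = n := by omega
      calc (n - 1) * (∏ i, k i) + (∏ i, k i) = (n - 1 + 1) * ∏ i, k i := by ring
        _ = n * ∏ i, k i := by rw [hn1]
    have hC : (∏ i, k i) ≤ (n - 1) * (∏ i, k i) :=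
      Nat.le_mul_of_pos_left _ (by omega)
    rw [hWmrank] at hE
    rw [hEdim] at hE
    -- now pure linear arithmetic
    set fV := Module.finrank ℝ Wmᗮ
    set fW := Module.finrank ℝ W
    set K := ∏ i, k i
    set A := ∑ j, K / k j
    set nK := n * K
    set C := (n - 1) * K
    omega
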